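/- arXiv:2206.11949 — 7 statements merged into one kernel-verified Lean document; each statement's English description precedes it below -/
import Mathlib

section
/- Let R be a commutative ring. Suppose given a map cl : Ideal(R) → Ideal(R) and, for each g ∈ R, a map cl_g : Ideal(R_g) → Ideal(R_g), all of which are extensive (J ⊆ cl(J)) and order-preserving, and suppose cl commutes with localization at single elements: for every g ∈ R and every ideal J of R, cl_g(J·R_g) = cl(J)·R_g. Then glueability holds: for any family (f_α)_{α∈A} of elements of R, any g in the radical of the ideal generated by the f_α, any ideal J of R, and any z ∈ R such that the image z/1 of z in R_{f_α} lies in cl_{f_α}(J·R_{f_α}) for all α ∈ A, the image z/1 of z in R_g lies in cl_g(J·R_g). -/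
/-- Membership of `z/1` in the extension of `I` to `R_g` is equivalent to `g^n * z ∈ I`. -/
lemma away_mem_map_iff {R : Type*} [CommRing R] (g : R) (I : Ideal R) (z : R) :
    algebraMap R (Localization.Away g) z ∈ I.map (algebraMap R (Localization.Away g)) ↔
      ∃ n : ℕ, g ^ n * z ∈ I := by
  rw [show algebraMap R (Localization.Away g) z
      = IsLocalization.mk' (Localization.Away g) z (1 : Submonoid.powers g) by
    rw [IsLocalization.mk'_one]]
  rw [IsLocalization.mk'_mem_map_algebraMap_iff (Submonoid.powers g)]
  constructor
  · rintro ⟨s, ⟨n, rfl⟩, hs⟩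
    exact ⟨n, hs⟩
  · rintro ⟨n, hn⟩
    exact ⟨g ^ n, ⟨n, rfl⟩, hn⟩

/-- A preclosure operation on ideals that commutes with localization at single
elements is glueable. -/
theorem glueable_of_commutes_with_localization_ideals {R : Type*} [CommRing R]
    (cl : Ideal R → Ideal R)
    (clg : ∀ g : R, Ideal (Localization.Away g) → Ideal (Localization.Away g))
    (hext : ∀ J : Ideal R, J ≤ cl J)
    (hmono : ∀ J K : Ideal R, J ≤ K → cl J ≤ cl K)
    (hextg : ∀ g : R, ∀ J : Ideal (Localization.Away g), J ≤ clg g J)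
    (hmonog : ∀ g : R, ∀ J K : Ideal (Localization.Away g), J ≤ K → clg g J ≤ clg g K)
    (hloc : ∀ g : R, ∀ J : Ideal R,
      clg g (J.map (algebraMap R (Localization.Away g)))
        = (cl J).map (algebraMap R (Localization.Away g)))
    {A : Type*} (f : A → R) (g : R)
    (hg : g ∈ (Ideal.span (Set.range f)).radical)
    (J : Ideal R) (z : R)
    (hz : ∀ α : A, algebraMap R (Localization.Away (f α)) z
      ∈ clg (f α) (J.map (algebraMap R (Localization.Away (f α))))) :
    algebraMap R (Localization.Away g) z
      ∈ clg g (J.map (algebraMap R (Localization.Away g))) := by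
  -- rewrite everything in terms of the ideal I = cl J
  set I := cl J with hI
  rw [hloc]
  -- the colon ideal K = (I : z)
  set K : Ideal R := I.colon (Ideal.span {z}) with hK
  have hmemK : ∀ r : R, r * z ∈ I → r ∈ K := fun r hr => by
    exact Ideal.mem_colon_span_singleton.mpr hr
  -- each f α lies in the radical of K
  have hfK : ∀ α, f α ∈ K.radical := by
    intro α
    have := hz α
    rw [hloc, ← hI, away_mem_map_iff] at this
    obtain ⟨n, hn⟩ := this
    exact ⟨n, hmemK _ hn⟩
  -- hence g lies in the radical of K
  have hgK : g ∈ K.radical := by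
    have hspan : Ideal.span (Set.range f) ≤ K.radical := by
      rw [Ideal.span_le]
      rintro _ ⟨α, rfl⟩
      exact hfK α
    have : (Ideal.span (Set.range f)).radical ≤ K.radical := by
      calc (Ideal.span (Set.range f)).radical ≤ K.radical.radical :=
            Ideal.radical_mono hspan
        _ = K.radical := Ideal.radical_idem K
    exact this hg
  obtain ⟨n, hn⟩ := hgK
  rw [away_mem_map_iff]
  exact ⟨n, by exact Ideal.mem_colon_span_singleton.mp hn⟩
end

section
/- Let R be a commutative ring and M an R-module. Suppose given a map cl : Submodule_R(M) → Submodule_R(M) and, for each g ∈ R, a map cl_g on R_g-submodules of the localized module M_g, all of which are extensive (L ⊆ cl(L)) and order-preserving, and suppose cl commutes with localization at single elements: for every g ∈ R and every submodule L ⊆ M, cl_g of the localization L_g (the image of L in M_g) equals the localization (cl(L))_g. Then glueability holds: for any family (f_α)_{α∈A} of elements of R, any g in the radical of the ideal generated by the f_α, any submodule L ⊆ M, and any z ∈ M such that the image z/1 of z in M_{f_α} lies in cl_{f_α}(L_{f_α}) for all α ∈ A, the image z/1 of z in M_g lies in cl_g(L_g). -/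
/-- A preclosure operation on submodules that commutes with localization at single
elements is glueable. -/
theorem glueable_of_commutes_with_localization_submodules {R : Type*} [CommRing R]
    {M : Type*} [AddCommGroup M] [Module R M]
    (cl : Submodule R M → Submodule R M)
    (clg : ∀ g : R, Submodule (Localization.Away g) (LocalizedModule (Submonoid.powers g) M) →
      Submodule (Localization.Away g) (LocalizedModule (Submonoid.powers g) M))
    (hext : ∀ L : Submodule R M, L ≤ cl L)
    (hmono : ∀ L L' : Submodule R M, L ≤ L' → cl L ≤ cl L')
    (hextg : ∀ g : R,
      ∀ L : Submodule (Localization.Away g) (LocalizedModule (Submonoid.powers g) M),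
        L ≤ clg g L)
    (hmonog : ∀ g : R,
      ∀ L L' : Submodule (Localization.Away g) (LocalizedModule (Submonoid.powers g) M),
        L ≤ L' → clg g L ≤ clg g L')
    (hloc : ∀ g : R, ∀ L : Submodule R M,
      clg g (L.localized (Submonoid.powers g)) = (cl L).localized (Submonoid.powers g))
    {A : Type*} (f : A → R) (g : R)
    (hg : g ∈ (Ideal.span (Set.range f)).radical)
    (L : Submodule R M) (z : M)
    (hz : ∀ α : A, LocalizedModule.mkLinearMap (Submonoid.powers (f α)) M z
      ∈ clg (f α) (L.localized (Submonoid.powers (f α)))) :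
    LocalizedModule.mkLinearMap (Submonoid.powers g) M z
      ∈ clg g (L.localized (Submonoid.powers g)) := by
  classical
  set N := cl L with hN
  -- the colon ideal of elements r with r • z ∈ N
  set J : Ideal R := N.colon (Submodule.span R {z}) with hJ
  have key : ∀ α : A, f α ∈ J.radical := by
    intro α
    have h := hz α
    rw [hloc] at h
    obtain ⟨m, hm, s, hs⟩ := (Submodule.mem_localized' _ _ _ _ _).mp h
    rw [← IsLocalizedModule.mk_eq_mk'] at hs
    rw [LocalizedModule.mkLinearMap_apply] at hs
    rw [LocalizedModule.mk_eq] at hs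
    obtain ⟨u, hu⟩ := hs
    obtain ⟨k, hk⟩ := (u * s).2
    refine ⟨k, ?_⟩
    rw [show f α ^ k = ((u * s : Submonoid.powers (f α)) : R) from hk]
    rw [Submodule.mem_colon_span_singleton]
    have : (↑(u * s) : R) • z = u • m := by
      simpa [mul_smul, Submonoid.smul_def] using hu.symm
    rw [this]
    exact N.smul_mem _ hm
  have hgJ : g ∈ J.radical := by
    have h1 : Ideal.span (Set.range f) ≤ J.radical := by
      rw [Ideal.span_le]
      rintro _ ⟨α, rfl⟩
      exact key α
    have := Ideal.radical_mono h1
    rw [Ideal.radical_idem] at this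
    exact this hg
  obtain ⟨n, hn⟩ := hgJ
  rw [Submodule.mem_colon_span_singleton] at hn
  rw [hloc]
  refine (Submodule.mem_localized' _ _ _ _ _).mpr ⟨g ^ n • z, hn, ⟨g ^ n, n, rfl⟩, ?_⟩
  rw [← IsLocalizedModule.mk_eq_mk', LocalizedModule.mkLinearMap_apply, LocalizedModule.mk_eq]
  exact ⟨1, by simp [Submonoid.smul_def]⟩
end

section
/- Let p be a prime, let R be a Noetherian commutative ring of characteristic p, let I be an ideal of R, and let z ∈ R. Let (f_α)_{α∈A} and (g_β)_{β∈B} be two families of elements of R such that the ideals they generate have the same radical. Then the image z/1 of z in R_{f_α} lies in the tight closure (I·R_{f_α})^* for all α ∈ A if and only if the image z/1 of z in R_{g_β} lies in the tight closure (I·R_{g_β})^* for all β ∈ B. -/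
/-- `offMinimal S` is `S°`, the set of elements of `S` lying outside every minimal prime. -/
def offMinimal (S : Type*) [CommRing S] : Set S :=
  {c : S | ∀ P ∈ minimalPrimes S, c ∉ P}

/-- The bracket power `J^[q]`, generated by `q`-th powers of elements of `J`. -/
def bracketPow {S : Type*} [CommRing S] (J : Ideal S) (q : ℕ) : Ideal S :=
  Ideal.span ((fun a => a ^ q) '' (J : Set S))

/-- The tight closure `J^*` of an ideal `J` in a ring of characteristic `p`. -/
def tightClosure (p : ℕ) {S : Type*} [CommRing S] (J : Ideal S) : Set S :=
  {z : S | ∃ c ∈ offMinimal S, ∃ e₀ : ℕ, ∀ e : ℕ, e₀ ≤ e →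
    c * z ^ p ^ e ∈ bracketPow J (p ^ e)}

section Aux

variable {p : ℕ}

lemma TC.bracketPow_span {T : Type*} [CommRing T] (hp : p.Prime) (hT : ((p : ℕ) : T) = 0)
    (X : Set T) (e : ℕ) :
    bracketPow (Ideal.span X) (p ^ e) = Ideal.span ((fun a => a ^ p ^ e) '' X) := by
  apply le_antisymm
  · rw [bracketPow, Ideal.span_le]
    rintro _ ⟨a, ha, rfl⟩
    simp only
    have ha' : a ∈ Ideal.span X := ha
    clear ha
    induction ha' using Submodule.span_induction with
    | mem x hx => exact Ideal.subset_span ⟨x, hx, rfl⟩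
    | zero =>
        rw [zero_pow (pow_ne_zero e hp.ne_zero)]
        exact Ideal.zero_mem _
    | add x y hx hy ihx ihy =>
        rw [add_pow_prime_pow_eq hp x y e, hT]; simp only [zero_mul, add_zero]
        exact Ideal.add_mem _ ihx ihy
    | smul r x hx ihx =>
        rw [smul_eq_mul, mul_pow]
        exact Ideal.mul_mem_left _ _ ihx
  · rw [Ideal.span_le]
    rintro _ ⟨x, hx, rfl⟩
    exact Ideal.subset_span ⟨x, Ideal.subset_span hx, rfl⟩

lemma TC.bracketPow_map {T T' : Type*} [CommRing T] [CommRing T'] (hp : p.Prime)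
    (hT' : ((p : ℕ) : T') = 0) (ψ : T →+* T') (J : Ideal T) (e : ℕ) :
    bracketPow (J.map ψ) (p ^ e) = (bracketPow J (p ^ e)).map ψ := by
  have h1 : J.map ψ = Ideal.span (ψ '' (J : Set T)) := by
    rw [← Ideal.map_span, Ideal.span_eq]
  rw [h1, TC.bracketPow_span hp hT', bracketPow, Ideal.map_span]
  congr 1
  rw [Set.image_image, Set.image_image]
  exact Set.image_congr' (fun a => (map_pow ψ a _).symm)

lemma TC.minimalPrimes_isPrime {R : Type*} [CommRing R] {P : Ideal R}
    (hP : P ∈ minimalPrimes R) : P.IsPrime := hP.1.1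

lemma TC.mem_of_unit_mul {T : Type*} [CommRing T] {J : Ideal T} {u x : T}
    (hu : IsUnit u) (hx : u * x ∈ J) : x ∈ J := by
  obtain ⟨v, hv⟩ := hu.exists_left_inv
  have := J.mul_mem_left v hx
  rwa [← mul_assoc, hv, one_mul] at this

section Loc

variable {R : Type*} [CommRing R] (h : R)

lemma TC.away_map_mem_iff (J : Ideal R) (y : R) :
    algebraMap R (Localization.Away h) y ∈ J.map (algebraMap R (Localization.Away h)) ↔
      ∃ k, h ^ k * y ∈ J := by
  constructor
  · intro hy
    obtain ⟨⟨j, m⟩, hm⟩ := (IsLocalization.mem_map_algebraMap_iff (Submonoid.powers h) _).1 hy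
    obtain ⟨k, hk⟩ := m.2
    rw [← map_mul] at hm
    obtain ⟨c, hc⟩ := (IsLocalization.eq_iff_exists (Submonoid.powers h) _).1 hm
    obtain ⟨k', hk'⟩ := c.2
    refine ⟨k' + k, ?_⟩
    have heq : h ^ (k' + k) * y = (c : R) * (y * (m : R)) := by
      rw [← hk', ← hk]; ring
    rw [heq, hc]
    exact J.mul_mem_left _ j.2
  · rintro ⟨k, hk⟩
    have := Ideal.mem_map_of_mem (algebraMap R (Localization.Away h)) hk
    rw [map_mul, map_pow] at this
    exact TC.mem_of_unit_mul ((IsLocalization.Away.algebraMap_isUnit h).pow k) this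

lemma TC.comap_minimalPrime (P : Ideal (Localization.Away h))
    (hP : P ∈ minimalPrimes (Localization.Away h)) :
    P.comap (algebraMap R (Localization.Away h)) ∈ minimalPrimes R ∧
      h ∉ P.comap (algebraMap R (Localization.Away h)) := by
  haveI hPp : P.IsPrime := hP.1.1
  have hnot : h ∉ P.comap (algebraMap R (Localization.Away h)) := by
    intro hmem
    rw [Ideal.mem_comap] at hmem
    exact hPp.ne_top (Ideal.eq_top_of_isUnit_mem _ hmem
      (IsLocalization.Away.algebraMap_isUnit h))
  refine ⟨⟨⟨Ideal.IsPrime.comap _, bot_le⟩, ?_⟩, hnot⟩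
  rintro Q' ⟨hQ'p, -⟩ hle
  haveI := hQ'p
  obtain ⟨Q'', hQ''min, hQ''le⟩ := Ideal.exists_minimalPrimes_le (bot_le (a := Q'))
  haveI hQ''p : Q''.IsPrime := hQ''min.1.1
  have hhQ'' : h ∉ Q'' := fun hmem => hnot (hle (hQ''le hmem))
  have hfree : Disjoint ((Submonoid.powers h : Submonoid R) : Set R) (Q'' : Set R) := by
    rw [Set.disjoint_left]
    rintro x ⟨k, rfl⟩ hxQ
    exact hhQ'' (hQ''p.mem_of_pow_mem k hxQ)
  have hmapprime := IsLocalization.isPrime_of_isPrime_disjoint (Submonoid.powers h)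
    (Localization.Away h) Q'' hQ''p hfree
  have hmaple : Q''.map (algebraMap R (Localization.Away h)) ≤ P :=
    le_trans (Ideal.map_mono (le_trans hQ''le hle)) Ideal.map_comap_le
  have hPeq : P ≤ Q''.map (algebraMap R (Localization.Away h)) :=
    hP.2 ⟨hmapprime, bot_le⟩ hmaple
  have : P.comap (algebraMap R (Localization.Away h)) = Q'' := by
    rw [le_antisymm hPeq hmaple]
    exact IsLocalization.comap_map_of_isPrime_disjoint (Submonoid.powers h)
        (Localization.Away h) hQ''p hfree
  rw [this]
  exact hQ''le

lemma TC.map_minimalPrime (Q : Ideal R) (hQ : Q ∈ minimalPrimes R) (hh : h ∉ Q) :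
    Q.map (algebraMap R (Localization.Away h)) ∈ minimalPrimes (Localization.Away h) := by
  haveI hQp : Q.IsPrime := hQ.1.1
  have hfree : Disjoint ((Submonoid.powers h : Submonoid R) : Set R) (Q : Set R) := by
    rw [Set.disjoint_left]
    rintro x ⟨k, rfl⟩ hxQ
    exact hh (hQp.mem_of_pow_mem k hxQ)
  have hprime := IsLocalization.isPrime_of_isPrime_disjoint (Submonoid.powers h)
    (Localization.Away h) Q hQp hfree
  refine ⟨⟨hprime, bot_le⟩, ?_⟩
  rintro P' ⟨hP'p, -⟩ hle
  haveI := hP'p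
  obtain ⟨P'', hP''min, hP''le⟩ := Ideal.exists_minimalPrimes_le (bot_le (a := P'))
  obtain ⟨hcomap_min, -⟩ := TC.comap_minimalPrime h P'' hP''min
  have h1 : P''.comap (algebraMap R (Localization.Away h)) ≤ Q := by
    refine le_trans (Ideal.comap_mono (le_trans hP''le hle)) ?_
    exact (IsLocalization.comap_map_of_isPrime_disjoint (Submonoid.powers h)
      (Localization.Away h) hQp hfree).le
  have h2 : Q ≤ P''.comap (algebraMap R (Localization.Away h)) :=
    hQ.2 ⟨hcomap_min.1.1, bot_le⟩ h1
  calc Q.map (algebraMap R (Localization.Away h))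
      ≤ (P''.comap (algebraMap R (Localization.Away h))).map
          (algebraMap R (Localization.Away h)) := Ideal.map_mono h2
    _ ≤ P'' := Ideal.map_comap_le
    _ ≤ P' := hP''le

end Loc

/-- The localization-free characterization of `z/1` lying in the tight closure of `I R_h`. -/
def Pgood (p : ℕ) {R : Type*} [CommRing R] (I : Ideal R) (z h : R) : Prop :=
  ∃ d : R, (∀ Q ∈ minimalPrimes R, h ∉ Q → d ∉ Q) ∧
    ∃ e₀ : ℕ, ∀ e : ℕ, e₀ ≤ e → ∃ k : ℕ, h ^ k * (d * z ^ p ^ e) ∈ bracketPow I (p ^ e)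

lemma TC.Pgood_iff (hp : p.Prime) {R : Type*} [CommRing R] [CharP R p] (I : Ideal R)
    (z h : R) :
    algebraMap R (Localization.Away h) z ∈
      tightClosure p (I.map (algebraMap R (Localization.Away h))) ↔ Pgood p I z h := by
  have hT' : ((p : ℕ) : Localization.Away h) = 0 := by
    rw [← map_natCast (algebraMap R (Localization.Away h)) p, CharP.cast_eq_zero R p, map_zero]
  constructor
  · rintro ⟨c, hc, e₀, hcond⟩
    obtain ⟨⟨d, m⟩, hdm⟩ := IsLocalization.surj (Submonoid.powers h) c
    have hφd : algebraMap R (Localization.Away h) d ∈ offMinimal (Localization.Away h) := by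
      intro P hP hmem
      haveI := TC.minimalPrimes_isPrime hP
      rw [← hdm] at hmem
      rcases ‹P.IsPrime›.mem_or_mem hmem with h1 | h1
      · exact hc P hP h1
      · obtain ⟨k, hk⟩ := m.2
        rw [← hk, map_pow] at h1
        exact ‹P.IsPrime›.ne_top (Ideal.eq_top_of_isUnit_mem _ h1
          ((IsLocalization.Away.algebraMap_isUnit h).pow k))
    refine ⟨d, ?_, e₀, ?_⟩
    · intro Q hQ hhQ hd
      exact hφd (Q.map (algebraMap R (Localization.Away h)))
        (TC.map_minimalPrime h Q hQ hhQ) (Ideal.mem_map_of_mem _ hd)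
    · intro e he
      have hmem := hcond e he
      have heq : algebraMap R (Localization.Away h) (d * z ^ p ^ e) =
          algebraMap R (Localization.Away h) (m : R) *
            (c * algebraMap R (Localization.Away h) z ^ p ^ e) := by
        rw [map_mul, map_pow, ← hdm]; ring
      have hmem2 : algebraMap R (Localization.Away h) (d * z ^ p ^ e) ∈
          (bracketPow I (p ^ e)).map (algebraMap R (Localization.Away h)) := by
        rw [← TC.bracketPow_map hp hT' (algebraMap R (Localization.Away h)) I e, heq]
        exact Ideal.mul_mem_left _ _ hmem
      exact (TC.away_map_mem_iff h (bracketPow I (p ^ e)) (d * z ^ p ^ e)).1 hmem2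
  · rintro ⟨d, hd, e₀, hcond⟩
    refine ⟨algebraMap R (Localization.Away h) d, ?_, e₀, ?_⟩
    · intro P hP hmem
      obtain ⟨hQmin, hQh⟩ := TC.comap_minimalPrime h P hP
      exact hd _ hQmin hQh hmem
    · intro e he
      obtain ⟨k, hk⟩ := hcond e he
      have hmem := Ideal.mem_map_of_mem (algebraMap R (Localization.Away h)) hk
      rw [map_mul, map_pow, map_mul, map_pow,
        ← TC.bracketPow_map hp hT' (algebraMap R (Localization.Away h)) I e] at hmem
      exact TC.mem_of_unit_mul ((IsLocalization.Away.algebraMap_isUnit h).pow k) hmem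

lemma TC.exists_avoid {R : Type*} [CommRing R] (𝒜 ℬ : Finset (Ideal R))
    (hA : ∀ Q ∈ 𝒜, Q ∈ minimalPrimes R) (hB : ∀ Q ∈ ℬ, Q ∈ minimalPrimes R)
    (hAB : ∀ Q ∈ 𝒜, Q ∉ ℬ) :
    ∃ u : R, (∀ Q ∈ 𝒜, u ∈ Q) ∧ ∀ Q ∈ ℬ, u ∉ Q := by
  by_contra hcon
  push_neg at hcon
  have hsub : ((𝒜.inf id : Ideal R) : Set R) ⊆ ⋃ Q ∈ (ℬ : Set (Ideal R)), (Q : Set R) := by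
    intro x hx
    obtain ⟨Q, hQ, hxQ⟩ := hcon x (fun Q hQ => (Submodule.mem_finsetInf.1 hx) Q hQ)
    exact Set.mem_biUnion hQ hxQ
  obtain ⟨Q', hQ', hle⟩ := (Ideal.subset_union_prime ⊥ ⊥
    (fun Q hQ _ _ => (hB Q hQ).1.1)).1 hsub
  obtain ⟨Q, hQ, hQle⟩ := ((hB Q' hQ').1.1.inf_le').1 hle
  have : Q = Q' := le_antisymm hQle ((hB Q' hQ').2 ⟨(hA Q hQ).1.1, bot_le⟩ hQle)
  exact hAB Q hQ (this ▸ hQ')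

lemma TC.binom_mem {R : Type*} [CommRing R] {J : Ideal R} {f d w u v : R} {b k : ℕ}
    (hb : (u * f) ^ b = 0) (hm : f ^ k * (d * w) ∈ J) :
    f ^ (k + b) * ((v * d + u) ^ b * w) ∈ J := by
  rw [add_pow, Finset.sum_mul, Finset.mul_sum]
  refine Ideal.sum_mem _ fun j hj => ?_
  cases j with
  | zero =>
      simp only [pow_zero, one_mul, Nat.sub_zero, Nat.choose_zero_right, Nat.cast_one, mul_one]
      have heq : f ^ (k + b) * (u ^ b * w) = f ^ k * w * (u * f) ^ b := by
        rw [mul_pow, pow_add]; ring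
      rw [heq, hb, mul_zero]
      exact J.zero_mem
  | succ j' =>
      have heq : f ^ (k + b) * ((v * d) ^ (j' + 1) * u ^ (b - (j' + 1)) *
          ((b.choose (j' + 1) : ℕ) : R) * w) =
          v ^ (j' + 1) * d ^ j' * u ^ (b - (j' + 1)) * ((b.choose (j' + 1) : ℕ) : R) * f ^ b *
            (f ^ k * (d * w)) := by
        rw [mul_pow, pow_add, pow_succ d j']; ring
      rw [heq]
      exact Ideal.mul_mem_left _ _ hm

lemma TC.Pgood_of_radical (hp : p.Prime) {R : Type*} [CommRing R] [IsNoetherianRing R]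
    (I : Ideal R) (z : R) {A : Type*} (f : A → R) (hf : ∀ α, Pgood p I z (f α)) (g : R)
    (hg : g ∈ (Ideal.span (Set.range f)).radical) : Pgood p I z g := by
  classical
  choose d hd e₀ hcond using hf
  have hfin := minimalPrimes.finite_of_isNoetherianRing (R := R)
  set Mf : Finset (Ideal R) := hfin.toFinset with hMf
  have hMfmem : ∀ Q : Ideal R, Q ∈ Mf ↔ Q ∈ minimalPrimes R := fun Q => hfin.mem_toFinset
  have hsep : ∀ α : A, ∃ u v : R,
      (∀ Q ∈ minimalPrimes R, f α ∉ Q → u ∈ Q ∧ v ∉ Q) ∧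
      (∀ Q ∈ minimalPrimes R, f α ∈ Q → u ∉ Q ∧ v ∈ Q) := by
    intro α
    obtain ⟨u, hu1, hu2⟩ := TC.exists_avoid (Mf.filter (f α ∉ ·)) (Mf.filter (f α ∈ ·))
      (fun Q hQ => (hMfmem Q).1 (Finset.mem_filter.1 hQ).1)
      (fun Q hQ => (hMfmem Q).1 (Finset.mem_filter.1 hQ).1)
      (fun Q hQ hQ' => (Finset.mem_filter.1 hQ).2 (Finset.mem_filter.1 hQ').2)
    obtain ⟨v, hv1, hv2⟩ := TC.exists_avoid (Mf.filter (f α ∈ ·)) (Mf.filter (f α ∉ ·))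
      (fun Q hQ => (hMfmem Q).1 (Finset.mem_filter.1 hQ).1)
      (fun Q hQ => (hMfmem Q).1 (Finset.mem_filter.1 hQ).1)
      (fun Q hQ hQ' => (Finset.mem_filter.1 hQ').2 (Finset.mem_filter.1 hQ).2)
    refine ⟨u, v, fun Q hQ hfQ => ?_, fun Q hQ hfQ => ?_⟩
    · exact ⟨hu1 Q (Finset.mem_filter.2 ⟨(hMfmem Q).2 hQ, hfQ⟩),
        hv2 Q (Finset.mem_filter.2 ⟨(hMfmem Q).2 hQ, hfQ⟩)⟩
    · exact ⟨hu2 Q (Finset.mem_filter.2 ⟨(hMfmem Q).2 hQ, hfQ⟩),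
        hv1 Q (Finset.mem_filter.2 ⟨(hMfmem Q).2 hQ, hfQ⟩)⟩
  choose u v husep hvsep using hsep
  have hnil : ∀ α : A, ∃ b : ℕ, (u α * f α) ^ b = 0 := by
    intro α
    have hmem : u α * f α ∈ nilradical R := by
      rw [nilradical_eq_sInf]
      refine Ideal.mem_sInf.2 ?_
      intro J hJ
      haveI : J.IsPrime := hJ
      obtain ⟨Q, hQ, hQle⟩ := Ideal.exists_minimalPrimes_le (bot_le (a := J))
      by_cases hfQ : f α ∈ Q
      · exact hQle (Q.mul_mem_left _ hfQ)
      · exact hQle (Q.mul_mem_right _ (husep α Q hQ hfQ).1)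
    exact mem_nilradical.1 hmem
  choose b hb using hnil
  set D' : A → R := fun α => (v α * d α + u α) ^ b α with hD'
  have hD'off : ∀ α, D' α ∈ offMinimal R := by
    intro α Q hQ hmem
    haveI : Q.IsPrime := TC.minimalPrimes_isPrime hQ
    have hbase : v α * d α + u α ∈ Q := ‹Q.IsPrime›.mem_of_pow_mem _ hmem
    by_cases hfQ : f α ∈ Q
    · obtain ⟨hu', hv'⟩ := hvsep α Q hQ hfQ
      have : v α * d α ∈ Q := Ideal.mul_mem_right _ _ hv'
      have : u α ∈ Q := by simpa using Q.sub_mem hbase this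
      exact hu' this
    · obtain ⟨hu', hv'⟩ := husep α Q hQ hfQ
      have hvd : v α * d α ∈ Q := by simpa using Q.sub_mem hbase hu'
      rcases ‹Q.IsPrime›.mem_or_mem hvd with h1 | h1
      · exact hv' h1
      · exact hd α Q hQ hfQ h1
  have hD'cond : ∀ α : A, ∀ e : ℕ, e₀ α ≤ e →
      ∃ k, f α ^ k * (D' α * z ^ p ^ e) ∈ bracketPow I (p ^ e) := by
    intro α e he
    obtain ⟨k, hk⟩ := hcond α e he
    exact ⟨k + b α, TC.binom_mem (hb α) hk⟩
  obtain ⟨N, hN⟩ := hg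
  obtain ⟨c, hc⟩ := Finsupp.mem_span_range_iff_exists_finsupp.1 hN
  set s : Finset A := c.support with hs
  set D : R := ∏ α ∈ s, D' α with hDdef
  have hDoff : D ∈ offMinimal R := by
    intro P hP hmem
    haveI : P.IsPrime := TC.minimalPrimes_isPrime hP
    obtain ⟨α, hα, hmemα⟩ := Ideal.IsPrime.prod_mem_iff.1 hmem
    exact hD'off α P hP hmemα
  refine ⟨D, fun Q hQ _ hDQ => hDoff Q hQ hDQ, s.sup e₀, ?_⟩
  intro e he
  have hkex : ∀ α : A, ∃ k, α ∈ s → f α ^ k * (D * z ^ p ^ e) ∈ bracketPow I (p ^ e) := by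
    intro α
    by_cases hα : α ∈ s
    · obtain ⟨k, hk⟩ := hD'cond α e (le_trans (Finset.le_sup hα) he)
      refine ⟨k, fun _ => ?_⟩
      have hmem := (bracketPow I (p ^ e)).mul_mem_left (∏ β ∈ s.erase α, D' β) hk
      have heq : (∏ β ∈ s.erase α, D' β) * (f α ^ k * (D' α * z ^ p ^ e)) =
          f α ^ k * (D * z ^ p ^ e) := by
        rw [hDdef, ← Finset.mul_prod_erase s D' hα]; ring
      rwa [heq] at hmem
    · exact ⟨0, fun hmem => absurd hmem hα⟩
  choose k hk using hkex
  set K : ℕ := s.sup k with hK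
  have hfK : ∀ α ∈ s, f α ^ K * (D * z ^ p ^ e) ∈ bracketPow I (p ^ e) := by
    intro α hα
    have heq : f α ^ K = f α ^ (K - k α) * f α ^ k α := by
      rw [← pow_add, Nat.sub_add_cancel (Finset.le_sup hα)]
    rw [heq, mul_assoc]
    exact Ideal.mul_mem_left _ _ (hk α hα)
  have hgs : g ∈ (Ideal.span ((fun α => f α ^ K) '' (s : Set A))).radical := by
    have h1 : g ^ N ∈ Ideal.span (f '' (s : Set A)) := by
      rw [← hc, Finsupp.sum]
      refine Ideal.sum_mem _ fun α hα => ?_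
      simp only [smul_eq_mul]
      exact Ideal.mul_mem_left _ _ (Ideal.subset_span ⟨α, hα, rfl⟩)
    have h2 : Ideal.span (f '' (s : Set A)) ≤
        (Ideal.span ((fun α => f α ^ K) '' (s : Set A))).radical := by
      rw [Ideal.span_le]
      rintro _ ⟨α, hα, rfl⟩
      exact ⟨K, Ideal.subset_span ⟨α, hα, rfl⟩⟩
    exact (le_trans (Ideal.radical_mono h2) (le_of_eq (Ideal.radical_idem _))) ⟨N, h1⟩
  obtain ⟨M, hM⟩ := hgs
  refine ⟨M, ?_⟩
  have hle : Ideal.span ((fun α => f α ^ K) '' (s : Set A)) ≤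
      (bracketPow I (p ^ e)).colon (Ideal.span {D * z ^ p ^ e}) := by
    rw [Ideal.span_le]
    rintro _ ⟨α, hα, rfl⟩
    rw [SetLike.mem_coe, Ideal.mem_colon_span_singleton]
    exact hfK α hα
  have := hle hM
  rwa [Ideal.mem_colon_span_singleton] at this

end Aux

lemma TC.main_dir {p : ℕ} (hp : p.Prime) {R : Type*} [CommRing R] [IsNoetherianRing R]
    (I : Ideal R) (z : R) {A B : Type*} (f : A → R) (g : B → R)
    (hle : (Ideal.span (Set.range g)).radical ≤ (Ideal.span (Set.range f)).radical)
    (hf : ∀ α, Pgood p I z (f α)) (β : B) : Pgood p I z (g β) :=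
  TC.Pgood_of_radical hp I z f hf (g β)
    (hle (Ideal.le_radical (Ideal.subset_span ⟨β, rfl⟩)))

/-- membership of `z/1` in the tight closure of `I` in the localizations `R_{f_α}`
depends only on the radical of the ideal generated by the `f_α`. -/
theorem tightClosure_localization_radical_independence (p : ℕ) (hp : p.Prime)
    {R : Type*} [CommRing R] [IsNoetherianRing R] [CharP R p]
    {A B : Type*} (f : A → R) (g : B → R)
    (hfg : (Ideal.span (Set.range f)).radical = (Ideal.span (Set.range g)).radical)
    (I : Ideal R) (z : R) :
    (∀ α : A, algebraMap R (Localization.Away (f α)) z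
        ∈ tightClosure p (I.map (algebraMap R (Localization.Away (f α))))) ↔
    (∀ β : B, algebraMap R (Localization.Away (g β)) z
        ∈ tightClosure p (I.map (algebraMap R (Localization.Away (g β))))) := by
  constructor
  · intro H β
    refine (TC.Pgood_iff hp I z (g β)).2 ?_
    refine TC.main_dir hp I z f g hfg.ge (fun α => ?_) β
    exact (TC.Pgood_iff hp I z (f α)).1 (H α)
  · intro H α
    refine (TC.Pgood_iff hp I z (f α)).2 ?_
    refine TC.main_dir hp I z g f hfg.le (fun β => ?_) α
    exact (TC.Pgood_iff hp I z (g β)).1 (H β)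
end

section
/- Let p be a prime, let R be a Noetherian commutative ring of characteristic p, and let (f_α)_{α∈A} be elements of R that generate the unit ideal. Let I be an ideal of R and z ∈ R. Then z lies in the tight closure I^* if and only if for each α ∈ A, the image z/1 of z in R_{f_α} lies in the tight closure (I·R_{f_α})^*. -/
/-- Frobenius moves span membership to span of powers, in char p. -/
theorem span_pow_mem {S : Type*} [CommRing S] {p : ℕ} (hp : p.Prime) (hp0 : (p : S) = 0)
    (T : Set S) {x : S} (hx : x ∈ Ideal.span T) (e : ℕ) :
    x ^ p ^ e ∈ Ideal.span ((fun a => a ^ p ^ e) '' T) := by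
  induction hx using Submodule.span_induction with
  | mem a ha => exact Ideal.subset_span ⟨a, ha, rfl⟩
  | zero =>
      rw [zero_pow (pow_ne_zero _ hp.ne_zero)]; exact Submodule.zero_mem _
  | add a b _ _ iha ihb =>
      rw [(Commute.all a b).add_pow_prime_pow_eq hp e, hp0, zero_mul, zero_mul, zero_mul, add_zero]
      exact Submodule.add_mem _ iha ihb
  | smul r a _ iha =>
      rw [smul_eq_mul, mul_pow]
      exact Ideal.mul_mem_left _ _ iha

theorem map_bracketPow_le {R S : Type*} [CommRing R] [CommRing S] (φ : R →+* S)
    (I : Ideal R) (q : ℕ) : (bracketPow I q).map φ ≤ bracketPow (I.map φ) q := by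
  rw [bracketPow, Ideal.map_span, Set.image_image]
  refine Ideal.span_le.2 ?_
  rintro _ ⟨a, ha, rfl⟩
  exact Ideal.subset_span ⟨φ a, Ideal.mem_map_of_mem φ ha, (map_pow φ a q).symm⟩

theorem le_map_bracketPow {R S : Type*} [CommRing R] [CommRing S] {p : ℕ} (hp : p.Prime)
    (hp0 : (p : S) = 0) (φ : R →+* S) (I : Ideal R) (e : ℕ) :
    bracketPow (I.map φ) (p ^ e) ≤ (bracketPow I (p ^ e)).map φ := by
  refine Ideal.span_le.2 ?_
  rintro _ ⟨y, hy, rfl⟩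
  have : y ∈ Ideal.span (φ '' (I : Set R)) := hy
  have h2 := span_pow_mem hp hp0 _ this e
  rw [Set.image_image] at h2
  rw [bracketPow, Ideal.map_span, Set.image_image]
  simpa only [map_pow, SetLike.mem_coe] using h2

theorem exists_ann_of_mem_minimal {R : Type*} [CommRing R] {P : Ideal R}
    (hP : P ∈ minimalPrimes R) {f : R} (hf : f ∈ P) :
    ∃ s ∉ P, ∃ m : ℕ, s * f ^ m = 0 := by
  haveI : P.IsPrime := hP.1.1
  have hnil : IsNilpotent (algebraMap R (Localization P.primeCompl) f) := by
    haveI := Ring.KrullDimLE.of_isLocalization P hP (Localization P.primeCompl)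
    rw [Ring.KrullDimLE.isNilpotent_iff_mem_maximalIdeal]
    exact (IsLocalization.AtPrime.to_map_mem_maximal_iff _ P f).2 hf
  obtain ⟨m, hm⟩ := hnil
  rw [← map_pow] at hm
  obtain ⟨s, hs⟩ := (IsLocalization.map_eq_zero_iff P.primeCompl _ _).1 hm
  exact ⟨s, s.2, m, hs⟩

theorem exists_adjust {R : Type*} [CommRing R] [IsNoetherianRing R] (f x : R)
    (hx : ∀ P ∈ minimalPrimes R, f ∉ P → x ∉ P) :
    ∃ x' : R, (∀ P ∈ minimalPrimes R, x' ∉ P) ∧ ∃ m : ℕ, f ^ m * (x' - x) = 0 := by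
  classical
  set K : Ideal R := RingHom.ker (algebraMap R (Localization.Away f)) with hK
  have hKmem : ∀ t : R, t ∈ K ↔ ∃ m : ℕ, f ^ m * t = 0 := by
    intro t
    rw [hK, RingHom.mem_ker, IsLocalization.map_eq_zero_iff (Submonoid.powers f)]
    constructor
    · rintro ⟨⟨s, m, rfl⟩, hs⟩; exact ⟨m, hs⟩
    · rintro ⟨m, hm⟩; exact ⟨⟨f ^ m, m, rfl⟩, hm⟩
  have hKP : ∀ P ∈ minimalPrimes R, f ∉ P → K ≤ P := by
    intro P hP hfP t ht
    obtain ⟨m, hm⟩ := (hKmem t).1 ht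
    haveI : P.IsPrime := hP.1.1
    rcases this.mem_or_mem (hm ▸ P.zero_mem) with h | h
    · exact absurd (this.mem_of_pow_mem m h) hfP
    · exact h
  have hKnle : ∀ P ∈ minimalPrimes R, f ∈ P → ¬K ≤ P := by
    intro P hP hfP hle
    obtain ⟨s, hs, m, hsm⟩ := exists_ann_of_mem_minimal hP hfP
    exact hs (hle ((hKmem s).2 ⟨m, by rw [mul_comm]; exact hsm⟩))
  have hfin := minimalPrimes.finite_of_isNoetherianRing R
  set S1 : Set (Ideal R) := {P ∈ minimalPrimes R | f ∈ P ∧ x ∈ P} with hS1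
  set S2 : Set (Ideal R) := {P ∈ minimalPrimes R | f ∈ P ∧ x ∉ P} with hS2
  have hS1fin : S1.Finite := hfin.subset (fun P hP => hP.1)
  have hS2fin : S2.Finite := hfin.subset (fun P hP => hP.1)
  set J : Ideal R := K * (∏ P ∈ hS2fin.toFinset, P) with hJ
  -- J is contained in K and in every P ∈ S2
  have hJK : J ≤ K := Ideal.mul_le_left
  have hJS2 : ∀ P ∈ S2, J ≤ P := by
    intro P hP
    refine le_trans Ideal.mul_le_right (le_trans Ideal.prod_le_inf ?_)
    simpa using Finset.inf_le (hS2fin.mem_toFinset.2 hP)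
  -- J is not contained in any P ∈ S1
  have hJS1 : ∀ P ∈ S1, ¬J ≤ P := by
    intro P hP hle
    haveI : P.IsPrime := hP.1.1.1
    rcases (Ideal.IsPrime.mul_le this).1 hle with h | h
    · exact hKnle P hP.1 hP.2.1 h
    · obtain ⟨Q, hQ, hQP⟩ := this.prod_le.1 h
      rw [Set.Finite.mem_toFinset] at hQ
      have hPQ : P ≤ Q := hP.1.2 ⟨hQ.1.1.1, bot_le⟩ hQP
      exact hQ.2.2 (hPQ hP.2.2)
  -- find t ∈ J avoiding all P ∈ S1
  have htex : ∃ t ∈ J, ∀ P ∈ S1, t ∉ P := by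
    by_contra h
    push_neg at h
    have hsub : (J : Set R) ⊆ ⋃ P ∈ (hS1fin.toFinset : Set (Ideal R)), ((fun P => P) P : Ideal R) := by
      intro t ht
      obtain ⟨P, hP, htP⟩ := h t ht
      exact Set.mem_biUnion (hS1fin.mem_toFinset.2 hP) htP
    obtain ⟨P, hP, hle⟩ := (Ideal.subset_union_prime (s := hS1fin.toFinset)
      (f := fun P => P) (⊥ : Ideal R) ⊥
      (fun P hP _ _ => (hS1fin.mem_toFinset.1 hP).1.1.1)).1 hsub
    exact hJS1 P (hS1fin.mem_toFinset.1 hP) hle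
  obtain ⟨t, htJ, htS1⟩ := htex
  refine ⟨x + t, ?_, ?_⟩
  · intro P hP hmem
    haveI : P.IsPrime := hP.1.1
    by_cases hfP : f ∈ P
    · by_cases hxP : x ∈ P
      · exact htS1 P ⟨hP, hfP, hxP⟩ ((Ideal.add_mem_iff_right P hxP).1 hmem)
      · exact hxP ((Ideal.add_mem_iff_left P (hJS2 P ⟨hP, hfP, hxP⟩ htJ)).1 hmem)
    · have hxP := hx P hP hfP
      exact hxP ((Ideal.add_mem_iff_left P (hKP P hP hfP (hJK htJ))).1 hmem)
  · obtain ⟨m, hm⟩ := (hKmem t).1 (hJK htJ)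
    exact ⟨m, by simpa using hm⟩

section Away
variable {R : Type*} [CommRing R] (f : R)

theorem exists_pow_mul_mem_of_mem_map (J : Ideal R) (y : R)
    (h : algebraMap R (Localization.Away f) y ∈ J.map (algebraMap R (Localization.Away f))) :
    ∃ m : ℕ, f ^ m * y ∈ J := by
  obtain ⟨⟨a, s⟩, heq⟩ := (IsLocalization.mem_map_algebraMap_iff (Submonoid.powers f) _).1 h
  obtain ⟨n, hn⟩ := s.2
  have : algebraMap R (Localization.Away f) (y * s - a) = 0 := by
    rw [map_sub, map_mul, sub_eq_zero, heq]
  obtain ⟨u, hu⟩ := (IsLocalization.map_eq_zero_iff (Submonoid.powers f) _ _).1 this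
  obtain ⟨k, hk⟩ := u.2
  refine ⟨k + n, ?_⟩
  simp only at hk hn
  have : f ^ k * (y * s - a) = 0 := by rw [hk]; exact_mod_cast hu
  have h2 : f ^ (k + n) * y = f ^ k * (a : R) := by
    rw [pow_add]
    calc f ^ k * f ^ n * y = f ^ k * (y * s) := by rw [hn]; ring
    _ = f ^ k * (y * s - a) + f ^ k * a := by ring
    _ = f ^ k * a := by rw [this, zero_add]
  rw [h2]
  exact J.mul_mem_left _ a.2

theorem disjoint_powers_of_prime {P : Ideal R} (hP : P.IsPrime) (hf : f ∉ P) :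
    Disjoint (Submonoid.powers f : Set R) (P : Set R) := by
  rw [Set.disjoint_left]
  rintro a ⟨n, rfl⟩ ha
  exact hf (hP.mem_of_pow_mem n ha)

theorem map_mem_minimalPrimes_away {P : Ideal R} (hP : P ∈ minimalPrimes R) (hf : f ∉ P) :
    P.map (algebraMap R (Localization.Away f)) ∈ minimalPrimes (Localization.Away f) := by
  haveI : P.IsPrime := hP.1.1
  have hd := disjoint_powers_of_prime f this hf
  have hprime := IsLocalization.isPrime_of_isPrime_disjoint (Submonoid.powers f)
    (Localization.Away f) P this hd
  refine ⟨⟨hprime, bot_le⟩, ?_⟩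
  rintro Q' ⟨hQ', -⟩ hle
  have hc : Q'.comap (algebraMap R (Localization.Away f)) ≤ P := by
    rw [← IsLocalization.comap_map_of_isPrime_disjoint (Submonoid.powers f)
      (Localization.Away f) this hd]
    exact Ideal.comap_mono hle
  haveI := hQ'
  have hPc : P ≤ Q'.comap (algebraMap R (Localization.Away f)) :=
    hP.2 ⟨Ideal.comap_isPrime _ _, bot_le⟩ hc
  calc P.map (algebraMap R (Localization.Away f))
      ≤ (Q'.comap (algebraMap R (Localization.Away f))).map (algebraMap R (Localization.Away f)) :=
        Ideal.map_mono hPc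
    _ = Q' := IsLocalization.map_comap (Submonoid.powers f) _ _

theorem comap_mem_minimalPrimes_away {Q : Ideal (Localization.Away f)}
    (hQ : Q ∈ minimalPrimes (Localization.Away f)) :
    Q.comap (algebraMap R (Localization.Away f)) ∈ minimalPrimes R ∧
      f ∉ Q.comap (algebraMap R (Localization.Away f)) := by
  haveI : Q.IsPrime := hQ.1.1
  set φ := algebraMap R (Localization.Away f)
  have hfP : f ∉ Q.comap φ := by
    intro hmem
    exact this.ne_top (Ideal.eq_top_of_isUnit_mem Q (Ideal.mem_comap.1 hmem)
      (IsLocalization.map_units _ (⟨f, 1, pow_one f⟩ : Submonoid.powers f)))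
  obtain ⟨P₀, hP₀, hle⟩ := Ideal.exists_minimalPrimes_le (bot_le (a := Q.comap φ))
  have hfP₀ : f ∉ P₀ := fun h => hfP (hle h)
  haveI : P₀.IsPrime := hP₀.1.1
  have hd := disjoint_powers_of_prime f this hfP₀
  have hQ₀ := map_mem_minimalPrimes_away f hP₀ hfP₀
  have hmaple : P₀.map φ ≤ Q := by
    calc P₀.map φ ≤ (Q.comap φ).map φ := Ideal.map_mono hle
      _ = Q := IsLocalization.map_comap (Submonoid.powers f) _ _
  have hQle : Q ≤ P₀.map φ := hQ.2 ⟨hQ₀.1.1, bot_le⟩ hmaple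
  have hQeq : Q = P₀.map φ := le_antisymm hQle hmaple
  have : Q.comap φ = P₀ := by
    rw [hQeq]; exact IsLocalization.comap_map_of_isPrime_disjoint (Submonoid.powers f)
      (Localization.Away f) ‹P₀.IsPrime› hd
  rw [this]
  exact ⟨hP₀, fun h => hfP₀ (this ▸ h)⟩

end Away

/-- if `(f_α)` generate the unit ideal, then `z ∈ I^*` iff `z/1 ∈ (I R_{f_α})^*`
for all `α`. -/
theorem mem_tightClosure_iff_forall_localization (p : ℕ) (hp : p.Prime)
    {R : Type*} [CommRing R] [IsNoetherianRing R] [CharP R p]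
    {A : Type*} (f : A → R) (hf : Ideal.span (Set.range f) = ⊤)
    (I : Ideal R) (z : R) :
    z ∈ tightClosure p I ↔
      ∀ α : A, algebraMap R (Localization.Away (f α)) z
        ∈ tightClosure p (I.map (algebraMap R (Localization.Away (f α)))) := by
  constructor
  · rintro ⟨c, hc, e₀, hrel⟩ α
    set φ := algebraMap R (Localization.Away (f α)) with hφ
    refine ⟨φ c, fun Q hQ hmem => ?_, e₀, fun e he => ?_⟩
    · obtain ⟨hPmin, -⟩ := comap_mem_minimalPrimes_away (f α) hQ
      exact hc _ hPmin (Ideal.mem_comap.2 hmem)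
    · have h1 : φ (c * z ^ p ^ e) ∈ (bracketPow I (p ^ e)).map φ :=
        Ideal.mem_map_of_mem φ (hrel e he)
      have h2 := map_bracketPow_le φ I (p ^ e) h1
      rwa [map_mul, map_pow] at h2
  · intro h
    classical
    have hone : (1 : R) ∈ Ideal.span (Set.range f) := hf ▸ Submodule.mem_top
    obtain ⟨g, hg⟩ := Finsupp.mem_span_range_iff_exists_finsupp.1 hone
    have key : ∀ α : A, ∃ c : R, (∀ P ∈ minimalPrimes R, c ∉ P) ∧ ∃ e₀ : ℕ,
        ∀ e : ℕ, e₀ ≤ e → ∃ m : ℕ,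
          f α ^ m * (c * z ^ p ^ e) ∈ bracketPow I (p ^ e) := by
      intro α
      obtain ⟨ct, hct, e₀, hrel⟩ := h α
      set φ := algebraMap R (Localization.Away (f α)) with hφ
      have hp0S : (p : Localization.Away (f α)) = 0 := by
        rw [← map_natCast φ p, CharP.cast_eq_zero R p, map_zero]
      obtain ⟨⟨x, s⟩, hxs⟩ := IsLocalization.surj (Submonoid.powers (f α)) ct
      simp only at hxs
      have hsunit : IsUnit (φ (s : R)) := IsLocalization.map_units _ s
      have hxmin : ∀ P ∈ minimalPrimes R, f α ∉ P → x ∉ P := by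
        intro P hP hfP hxP
        have hQ := map_mem_minimalPrimes_away (f α) hP hfP
        haveI : (P.map φ).IsPrime := hQ.1.1
        have hφx : φ x ∈ P.map φ := Ideal.mem_map_of_mem φ hxP
        rw [← hxs] at hφx
        rcases this.mem_or_mem hφx with h' | h'
        · exact hct _ hQ h'
        · exact this.ne_top (Ideal.eq_top_of_isUnit_mem _ h' hsunit)
      obtain ⟨c, hcmin, m₀, hm₀⟩ := exists_adjust (f α) x hxmin
      refine ⟨c, hcmin, e₀, fun e he => ?_⟩
      have hφcx : φ c = φ x := by
        have h0 : φ (f α) ^ m₀ * (φ c - φ x) = 0 := by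
          rw [← map_pow, ← map_sub, ← map_mul, hm₀, map_zero]
        have hu : IsUnit (φ (f α) ^ m₀) :=
          (IsLocalization.map_units _ (⟨f α, 1, pow_one _⟩ : Submonoid.powers (f α))).pow m₀
        exact sub_eq_zero.1 (hu.mul_right_eq_zero.1 h0)
      have h1 : φ (c * z ^ p ^ e) ∈ bracketPow (I.map φ) (p ^ e) := by
        rw [map_mul, map_pow, hφcx, ← hxs, mul_comm ct (φ (s : R)), mul_assoc]
        exact Ideal.mul_mem_left _ _ (hrel e he)
      have h2 : φ (c * z ^ p ^ e) ∈ (bracketPow I (p ^ e)).map φ :=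
        le_map_bracketPow hp hp0S φ I e h1
      exact exists_pow_mul_mem_of_mem_map (f α) _ _ h2
    choose cfun hcmin efun hrelf using key
    refine ⟨∏ α ∈ g.support, cfun α, fun P hP hmem => ?_, g.support.sup efun,
      fun e he => ?_⟩
    · haveI : P.IsPrime := hP.1.1
      obtain ⟨α, hα, hcα⟩ := (Ideal.IsPrime.prod_mem_iff).1 hmem
      exact hcmin α P hP hcα
    · set c : R := ∏ α ∈ g.support, cfun α with hc
      set W : Ideal R := (bracketPow I (p ^ e)).colon (Ideal.span {c * z ^ p ^ e}) with hW
      have hWf : ∀ α ∈ g.support, f α ∈ W.radical := by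
        intro α hα
        obtain ⟨m, hm⟩ := hrelf α e (le_trans (Finset.le_sup hα) he)
        refine ⟨m, Ideal.mem_colon_span_singleton.2 ?_⟩
        have : c * z ^ p ^ e = (∏ β ∈ g.support.erase α, cfun β) * (cfun α * z ^ p ^ e) := by
          rw [hc, ← Finset.prod_erase_mul _ _ hα]; ring
        rw [this, mul_comm (f α ^ m), mul_assoc]
        exact Ideal.mul_mem_left _ _ (by rwa [mul_comm (cfun α * z ^ p ^ e)])
      have hone' : (1 : R) ∈ W.radical := by
        rw [← hg]
        refine Submodule.sum_mem _ fun α hα => ?_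
        exact Ideal.mul_mem_left _ _ (hWf α hα)
      have : W = ⊤ := Ideal.radical_eq_top.1 (Ideal.eq_top_iff_one _ |>.2 hone')
      have h1 : (1 : R) ∈ W := this ▸ Submodule.mem_top
      have := Ideal.mem_colon_span_singleton.1 h1
      rwa [one_mul] at this
end

section
/- Tight closure of ideals is openly persistent along localization at single elements: let p be a prime, let R be a Noetherian commutative ring of characteristic p, let I be an ideal of R, let f ∈ R, and let z ∈ R with z in the tight closure I^*. Then the image z/1 of z in R_f lies in the tight closure (I·R_f)^*. -/
/-- Mapping a bracket power is contained in the bracket power of the mapped ideal. -/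
lemma bracketPow_map_le {R S : Type*} [CommRing R] [CommRing S] (φ : R →+* S)
    (J : Ideal R) (q : ℕ) : (bracketPow J q).map φ ≤ bracketPow (J.map φ) q := by
  rw [bracketPow, Ideal.map_span]
  apply Ideal.span_mono
  rintro _ ⟨_, ⟨a, ha, rfl⟩, rfl⟩
  exact ⟨φ a, Ideal.mem_map_of_mem φ ha, (map_pow φ a q).symm⟩

/-- The contraction of a minimal prime of a localization is a minimal prime. -/
lemma comap_mem_minimalPrimes_of_isLocalization {R S : Type*} [CommRing R] [CommRing S]
    [Algebra R S] (M : Submonoid R) [IsLocalization M S]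
    (Q : Ideal S) (hQ : Q ∈ minimalPrimes S) :
    Q.comap (algebraMap R S) ∈ minimalPrimes R := by
  rw [minimalPrimes_eq_minimals] at hQ ⊢
  haveI hQp : Q.IsPrime := hQ.1
  set P := Q.comap (algebraMap R S) with hP
  haveI : P.IsPrime := Ideal.comap_isPrime _ Q
  obtain ⟨P', hP'min, hP'le⟩ := Ideal.exists_minimalPrimes_le (I := (⊥ : Ideal R))
    (J := P) bot_le
  haveI hP'p : P'.IsPrime := hP'min.1.1
  have hdisj : Disjoint (M : Set R) (P' : Set R) := by
    rw [Set.disjoint_left]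
    intro m hm hmP'
    have : algebraMap R S m ∈ Q := hP'le hmP'
    exact hQp.ne_top (Ideal.eq_top_of_isUnit_mem _ this (IsLocalization.map_units S ⟨m, hm⟩))
  have hQ' : (P'.map (algebraMap R S)).IsPrime :=
    IsLocalization.isPrime_of_isPrime_disjoint M S P' hP'p hdisj
  have hle : P'.map (algebraMap R S) ≤ Q := by
    rw [Ideal.map_le_iff_le_comap]; exact hP'le
  have heq : P'.map (algebraMap R S) = Q := le_antisymm hle (hQ.2 hQ' hle)
  have : P' = P := by
    rw [hP, ← heq]; exact (IsLocalization.comap_map_of_isPrime_disjoint M S hP'p hdisj).symm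
  rw [← this]
  exact ⟨hP'p, fun J hJ hJle => hP'min.2 ⟨hJ, bot_le⟩ hJle⟩

/-- tight closure of ideals is openly persistent along localization at single
elements. -/
theorem tightClosure_openlyPersistent (p : ℕ) (hp : p.Prime)
    {R : Type*} [CommRing R] [IsNoetherianRing R] [CharP R p]
    (I : Ideal R) (f : R) (z : R) (hz : z ∈ tightClosure p I) :
    algebraMap R (Localization.Away f) z
      ∈ tightClosure p (I.map (algebraMap R (Localization.Away f))) := by
  obtain ⟨c, hc, e₀, h⟩ := hz
  set φ := algebraMap R (Localization.Away f)
  refine ⟨φ c, ?_, e₀, fun e he => ?_⟩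
  · intro Q hQ hcQ
    exact hc (Q.comap φ)
      (comap_mem_minimalPrimes_of_isLocalization (Submonoid.powers f) Q hQ) hcQ
  · have := Ideal.mem_map_of_mem φ (h e he)
    rw [map_mul, map_pow] at this
    exact bracketPow_map_le φ I (p ^ e) this
end

section
/- Let R be a Noetherian commutative ring of minimal-prime-avoiding elements, and let (f_i)_{i∈A} be elements of R generating the unit ideal. Let a be an ideal of R such that for each i ∈ A, the extended ideal a·R_{f_i} contains an element lying outside every minimal prime ideal of R_{f_i}. Then a contains an element lying outside every minimal prime ideal of R. -/
lemma map_mem_minimalPrimes_away_s10 {R : Type*} [CommRing R] {p : Ideal R}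
    (hp : p ∈ minimalPrimes R) {g : R} (hg : g ∉ p) :
    p.map (algebraMap R (Localization.Away g)) ∈ minimalPrimes (Localization.Away g) := by
  rw [minimalPrimes_eq_minimals] at hp ⊢
  have hprime : p.IsPrime := hp.1
  have hd : Disjoint ((Submonoid.powers g : Submonoid R) : Set R) (p : Set R) := by
    rw [Set.disjoint_left]
    rintro x ⟨n, rfl⟩ hx
    exact hg (hprime.mem_of_pow_mem n hx)
  refine ⟨IsLocalization.isPrime_of_isPrime_disjoint (Submonoid.powers g) _ p hprime hd, ?_⟩
  intro q hq hle
  have hqc : q.comap (algebraMap R (Localization.Away g)) ≤ p := by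
    rw [← IsLocalization.comap_map_of_isPrime_disjoint (Submonoid.powers g)
      (Localization.Away g) hprime hd]
    exact Ideal.comap_mono hle
  have : p ≤ q.comap (algebraMap R (Localization.Away g)) :=
    hp.2 (Ideal.IsPrime.comap _ (hK := hq)) hqc
  calc p.map (algebraMap R (Localization.Away g))
      ≤ (q.comap (algebraMap R (Localization.Away g))).map
          (algebraMap R (Localization.Away g)) := Ideal.map_mono this
    _ = q := IsLocalization.map_comap (Submonoid.powers g) _ q

/-- if `(f_i)` generate the unit ideal of a Noetherian ring `R` and each extended
ideal `a R_{f_i}` meets `(R_{f_i})°`, then `a` meets `R°`. -/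
theorem exists_offMinimal_of_forall_localization {R : Type*} [CommRing R] [IsNoetherianRing R]
    {A : Type*} (f : A → R) (hf : Ideal.span (Set.range f) = ⊤)
    (a : Ideal R)
    (ha : ∀ i : A, ∃ c ∈ offMinimal (Localization.Away (f i)),
      c ∈ a.map (algebraMap R (Localization.Away (f i)))) :
    ∃ c ∈ offMinimal R, c ∈ a := by
  have hfin : (minimalPrimes R).Finite := minimalPrimes.finite_of_isNoetherianRing R
  -- a is not contained in any minimal prime
  have key : ∀ p ∈ minimalPrimes R, ¬ a ≤ p := by
    intro p hp hle
    have hprime : p.IsPrime := hp.1.1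
    -- some f i is not in p
    obtain ⟨i, hi⟩ : ∃ i, f i ∉ p := by
      by_contra h
      push_neg at h
      have : Ideal.span (Set.range f) ≤ p := by
        rw [Ideal.span_le]
        rintro x ⟨i, rfl⟩
        exact h i
      rw [hf] at this
      exact hprime.ne_top (top_le_iff.mp this)
    obtain ⟨c, hc, hca⟩ := ha i
    have hmp := map_mem_minimalPrimes_away_s10 hp hi
    exact hc _ hmp (Ideal.map_mono hle hca)
  -- prime avoidance
  set s := hfin.toFinset with hs
  have : ¬ ((a : Set R) ⊆ ⋃ p ∈ (s : Set (Ideal R)), (p : Set R)) := by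
    rw [Ideal.subset_union_prime ⊥ ⊥ (fun p hps _ _ => by
      exact (hfin.mem_toFinset.mp hps).1.1)]
    rintro ⟨p, hps, hle⟩
    exact key p (hfin.mem_toFinset.mp hps) hle
  obtain ⟨c, hca, hc⟩ := Set.not_subset.mp this
  refine ⟨c, ?_, hca⟩
  intro P hP hcP
  exact hc (Set.mem_biUnion (hfin.mem_toFinset.mpr hP) hcP)
end

section
/- Let p be a prime and let R be a Noetherian commutative ring of characteristic p, with X = Spec R its prime spectrum as a scheme. Then the following are equivalent: (i) for every affine open subset U of X, every ideal of the ring of sections O_X(U) is tightly closed (with respect to the prime p); (ii) for every f ∈ R, every ideal of the localization R_f is tightly closed, i.e., R_f is weakly F-regular. -/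
/-- A ring `S` is weakly F-regular (with respect to `p`) if every ideal is tightly closed. -/
def WeaklyFRegular (p : ℕ) (S : Type*) [CommRing S] : Prop :=
  ∀ J : Ideal S, tightClosure p J = (J : Set S)

/-- A ring `S` is semi F-regular (with respect to `p`) if for every `f ∈ S` the localization
`S_f` is weakly F-regular. -/
def SemiFRegular (p : ℕ) (S : Type*) [CommRing S] : Prop :=
  ∀ f : S, WeaklyFRegular p (Localization.Away f)

section AuxLemmas

section Helpers

variable {S S' : Type*} [CommRing S] [CommRing S']

lemma comap_mem_minimalPrimes_of_ringEquiv (e : S ≃+* S') {P : Ideal S'}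
    (hP : P ∈ minimalPrimes S') : P.comap (e : S →+* S') ∈ minimalPrimes S := by
  rw [minimalPrimes_eq_minimals] at hP ⊢
  refine ⟨hP.1.comap _, ?_⟩
  intro q hq hle
  have h2 : (P.comap (e : S →+* S')).comap (e.symm : S' →+* S) = P := by
    ext x
    simp only [Ideal.mem_comap, RingEquiv.coe_toRingHom, RingEquiv.apply_symm_apply]
  have hq' : q.comap (e.symm : S' →+* S) ≤ P := by
    rw [← h2]; exact Ideal.comap_mono hle
  have hle2 := hP.2 (hq.comap (e.symm : S' →+* S)) hq'
  intro x hx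
  have h3 : e x ∈ q.comap (e.symm : S' →+* S) := hle2 (Ideal.mem_comap.mpr hx)
  rw [Ideal.mem_comap] at h3
  simpa using h3

lemma offMinimal_ringEquiv (e : S ≃+* S') {c : S} (hc : c ∈ offMinimal S) :
    e c ∈ offMinimal S' := fun P hP hmem =>
  hc _ (comap_mem_minimalPrimes_of_ringEquiv e hP) (Ideal.mem_comap.mpr hmem)

lemma map_mem_bracketPow (g : S →+* S') {J : Ideal S} {q : ℕ} {z : S}
    (hz : z ∈ bracketPow J q) : g z ∈ bracketPow (J.map g) q := by
  have h : bracketPow J q ≤ (bracketPow (J.map g) q).comap g := by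
    rw [bracketPow, Ideal.span_le]
    rintro _ ⟨a, ha, rfl⟩
    simp only [Set.mem_setOf_eq, SetLike.mem_coe, Ideal.mem_comap, map_pow]
    exact Ideal.subset_span ⟨g a, Ideal.mem_map_of_mem g ha, rfl⟩
  exact h hz

lemma subset_tightClosure (p : ℕ) (J : Ideal S) : (J : Set S) ⊆ tightClosure p J := by
  intro z hz
  refine ⟨1, fun P hP h1 => hP.1.1.ne_top (Ideal.eq_top_iff_one P |>.mpr h1), 0,
    fun e _ => ?_⟩
  rw [one_mul]
  exact Ideal.subset_span ⟨z, hz, rfl⟩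

lemma offMinimal_localization (M : Submonoid S) (S' : Type*) [CommRing S'] [Algebra S S']
    [IsLocalization M S'] {c : S} (hc : c ∈ offMinimal S) :
    algebraMap S S' c ∈ offMinimal S' := by
  intro P hP hmem
  have hPp : P.IsPrime := hP.1.1
  obtain ⟨hp, hd⟩ := (IsLocalization.isPrime_iff_isPrime_disjoint M S' P).mp hPp
  haveI := hp
  obtain ⟨q, hq, hqle⟩ := Ideal.exists_minimalPrimes_le (bot_le :
    (⊥ : Ideal S) ≤ P.comap (algebraMap S S'))
  have hqp : q.IsPrime := hq.1.1
  have hqd : Disjoint (M : Set S) (q : Set S) := hd.mono_right hqle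
  have hQ : (q.map (algebraMap S S')).IsPrime :=
    IsLocalization.isPrime_of_isPrime_disjoint M S' q hqp hqd
  have hQle : q.map (algebraMap S S') ≤ P :=
    le_trans (Ideal.map_mono hqle) (Ideal.map_comap_le)
  have hPQ : P ≤ q.map (algebraMap S S') := hP.2 ⟨hQ, bot_le⟩ hQle
  have hPeq : P = q.map (algebraMap S S') := le_antisymm hPQ hQle
  refine hc q hq ?_
  have h' := IsLocalization.comap_map_of_isPrime_disjoint M S' hqp hqd
  rw [← h', ← hPeq]
  exact hmem

lemma tightClosure_localization (p : ℕ) (M : Submonoid S) (S' : Type*) [CommRing S']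
    [Algebra S S'] [IsLocalization M S'] {J : Ideal S} {z : S}
    (hz : z ∈ tightClosure p J) :
    algebraMap S S' z ∈ tightClosure p (J.map (algebraMap S S')) := by
  obtain ⟨c, hc, e₀, he⟩ := hz
  refine ⟨algebraMap S S' c, offMinimal_localization M S' hc, e₀, fun e he' => ?_⟩
  have := map_mem_bracketPow (algebraMap S S') (he e he')
  rwa [map_mul, map_pow] at this

lemma weaklyFRegular_congr {p : ℕ} (e : S ≃+* S') (h : WeaklyFRegular p S) :
    WeaklyFRegular p S' := by
  intro J'
  refine Set.Subset.antisymm ?_ (subset_tightClosure p J')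
  intro z hz
  obtain ⟨c, hc, e₀, he⟩ := hz
  have key : e.symm z ∈ tightClosure p (J'.comap (e.symm.symm : S →+* S')) := by
    refine ⟨e.symm c, offMinimal_ringEquiv e.symm hc, e₀, fun n hn => ?_⟩
    have := map_mem_bracketPow (e.symm : S' →+* S) (he n hn)
    rw [map_mul, map_pow] at this
    rwa [Ideal.map_comap_of_equiv e.symm, RingEquiv.symm_symm] at this
  have : e.symm z ∈ (J'.comap (e : S →+* S') : Set S) := by
    rw [← h (J'.comap (e : S →+* S'))]; exact key
  have := Ideal.mem_comap.mp this
  simpa using this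

lemma mem_of_away_localizations {ι : Type*} (g : ι → S)
    (hg : Ideal.span (Set.range g) = ⊤) (T : ι → Type*) [∀ i, CommRing (T i)]
    [∀ i, Algebra S (T i)] [∀ i, IsLocalization.Away (g i) (T i)] {J : Ideal S} {x : S}
    (hx : ∀ i, algebraMap S (T i) x ∈ J.map (algebraMap S (T i))) : x ∈ J := by
  set I := J.colon (Ideal.span {x}) with hI
  have hrad : ∀ i, g i ∈ I.radical := by
    intro i
    obtain ⟨⟨a, s⟩, ha⟩ :=
      (IsLocalization.mem_map_algebraMap_iff (Submonoid.powers (g i)) (T i)).mp (hx i)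
    rw [← map_mul] at ha
    obtain ⟨c, hc⟩ := (IsLocalization.eq_iff_exists (Submonoid.powers (g i)) (T i)).mp ha
    obtain ⟨n, hn⟩ := (Submonoid.mem_powers_iff _ _).mp (c * s).2
    refine ⟨n, ?_⟩
    have hcs : ((c : S) * s) * x = ↑c * (x * ↑s) := by ring
    rw [Ideal.mem_colon_span_singleton, hn, Submonoid.coe_mul, hcs, hc]
    exact Ideal.mul_mem_left _ _ a.2
  have htop : I = ⊤ := by
    rw [← Ideal.radical_eq_top, eq_top_iff, ← hg, Ideal.span_le]
    rintro _ ⟨i, rfl⟩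
    exact hrad i
  have h1 : (1 : S) ∈ I := htop ▸ Submodule.mem_top
  rw [Ideal.mem_colon_span_singleton, one_mul] at h1
  exact h1

end Helpers

lemma weaklyFRegular_of_cover {p : ℕ} {S : Type*} [CommRing S] {ι : Type*} (g : ι → S)
    (hg : Ideal.span (Set.range g) = ⊤) (T : ι → Type*) [∀ i, CommRing (T i)]
    [∀ i, Algebra S (T i)] [∀ i, IsLocalization.Away (g i) (T i)]
    (hT : ∀ i, WeaklyFRegular p (T i)) : WeaklyFRegular p S := by
  intro J
  refine Set.Subset.antisymm ?_ (subset_tightClosure p J)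
  intro z hz
  refine mem_of_away_localizations g hg T (fun i => ?_)
  have h1 := tightClosure_localization p (Submonoid.powers (g i)) (T i) hz
  have h2 := hT i (J.map (algebraMap S (T i)))
  rw [h2] at h1
  exact h1


end AuxLemmas

open AlgebraicGeometry CategoryTheory

universe u

/-- `Γ` over the basic open of `f` is weakly F-regular iff the localization away from `f` is. -/
lemma wfr_basicOpen_iff (p : ℕ) (R' : CommRingCat.{u}) (f : R') :
    WeaklyFRegular p Γ(Spec R', PrimeSpectrum.basicOpen f) ↔
      WeaklyFRegular p (Localization.Away f) := by
  letI := IsAffineOpen.instAlgebraCarrierObjOppositeOpensCarrierCarrierCommRingCatSpecPresheafOpOpens (R := R') (U := PrimeSpectrum.basicOpen f)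
  constructor
  · intro h
    exact weaklyFRegular_congr (IsLocalization.algEquiv (Submonoid.powers f)
      Γ(Spec R', PrimeSpectrum.basicOpen f) (Localization.Away f)).toRingEquiv h
  · intro h
    exact weaklyFRegular_congr (IsLocalization.algEquiv (Submonoid.powers f)
      (Localization.Away f) Γ(Spec R', PrimeSpectrum.basicOpen f)).toRingEquiv h


/-- for `X = Spec R` with `R` Noetherian of characteristic `p`, every ideal of
every ring of sections over an affine open is tightly closed iff `R_f` is weakly F-regular
for every `f ∈ R` (i.e. `R` is semi F-regular). -/
theorem affineOpens_weaklyFRegular_iff_semiFRegular (p : ℕ) (hp : p.Prime)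
    (R : Type u) [CommRing R] [IsNoetherianRing R] [CharP R p] :
    (∀ U : (Spec (CommRingCat.of R)).Opens, IsAffineOpen U →
      WeaklyFRegular p Γ(Spec (CommRingCat.of R), U)) ↔
    (∀ f : R, WeaklyFRegular p (Localization.Away f)) := by
  classical
  constructor
  · intro h f
    exact (wfr_basicOpen_iff p (CommRingCat.of R) f).mp
      (h (PrimeSpectrum.basicOpen f) (IsAffineOpen.Spec_basicOpen (R := CommRingCat.of R) f))
  · intro h U hU
    -- choose, for every point of `U`, a basic open neighbourhood contained in `U`
    have hpick : ∀ x : U, ∃ F : Γ(Spec (CommRingCat.of R), ⊤),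
        (Spec (CommRingCat.of R)).basicOpen F ≤ U ∧
          ↑x ∈ (Spec (CommRingCat.of R)).basicOpen F := fun x =>
      (isAffineOpen_top (Spec (CommRingCat.of R))).exists_basicOpen_le x (by trivial)
    choose F hF1 hF2 using hpick
    -- restrict these global sections to `U`
    let g : U → Γ(Spec (CommRingCat.of R), U) := fun x =>
      (Spec (CommRingCat.of R)).presheaf.map (homOfLE le_top).op (F x)
    have hbo : ∀ x : U, (Spec (CommRingCat.of R)).basicOpen (g x) =
        (Spec (CommRingCat.of R)).basicOpen (F x) := by
      intro x
      show (Spec (CommRingCat.of R)).basicOpen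
        ((Spec (CommRingCat.of R)).presheaf.map (homOfLE le_top).op (F x)) = _
      rw [Scheme.basicOpen_res]
      exact inf_eq_right.mpr (hF1 x)
    -- the corresponding basic opens cover `U`
    have hsup : (⨆ a : Set.range g, (Spec (CommRingCat.of R)).basicOpen
        (a : Γ(Spec (CommRingCat.of R), U))) = U := by
      apply le_antisymm
      · apply iSup_le
        rintro ⟨_, x, rfl⟩
        rw [hbo x]
        exact hF1 x
      · intro y hy
        refine TopologicalSpace.Opens.mem_iSup.mpr ⟨⟨g ⟨y, hy⟩, ⟨⟨y, hy⟩, rfl⟩⟩, ?_⟩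
        rw [hbo ⟨y, hy⟩]
        exact hF2 ⟨y, hy⟩
    have hspan : Ideal.span (Set.range g) = ⊤ :=
      (IsAffineOpen.iSup_basicOpen_eq_self_iff hU (s := Set.range g)).mp hsup
    -- local sections form localizations, all weakly F-regular by the hypothesis
    letI T : Set.range g → Type u := fun a =>
      Γ(Spec (CommRingCat.of R), (Spec (CommRingCat.of R)).basicOpen
        (a : Γ(Spec (CommRingCat.of R), U)))
    haveI : ∀ a : Set.range g, IsLocalization.Away
        ((a : Γ(Spec (CommRingCat.of R), U))) (T a) :=
      fun a => hU.isLocalization_basicOpen _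
    have hspan' : Ideal.span (Set.range (fun a : Set.range g =>
        (a : Γ(Spec (CommRingCat.of R), U)))) = ⊤ := by
      rwa [Subtype.range_coe]
    refine weaklyFRegular_of_cover (fun a : Set.range g =>
      (a : Γ(Spec (CommRingCat.of R), U))) hspan' T (fun a => ?_)
    obtain ⟨a, x, rfl⟩ := a
    show WeaklyFRegular p Γ(Spec (CommRingCat.of R),
      (Spec (CommRingCat.of R)).basicOpen (g x))
    rw [hbo x, basicOpen_eq_of_affine']
    exact (wfr_basicOpen_iff p (CommRingCat.of R) _).mpr
      (h ((Scheme.ΓSpecIso (CommRingCat.of R)).hom (F x)))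
end
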